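/- If (T, λ) is an edge-labeled tree with at least two leaves such that for every pair of distinct leaves x, y the unique path in T from x to y contains at least one edge labeled 1, then the number of edges of T labeled 1 is at least ℓ − 1, where ℓ is the number of leaves of T. -/

import Mathlib

open SimpleGraph

/-- A leaf of a graph is a vertex with exactly one neighbour (i.e. a vertex of degree 1). -/
def SimpleGraph.IsLeaf {V : Type*} (T : SimpleGraph V) (v : V) : Prop :=
  ∃! u, T.Adj v u

/-- The undirected Fitch graph explained by an edge-labelled tree `(T, lam)`
(labels: `true` = 1, `false` = 0): its vertices are the leaves of `T`, and two
distinct leaves are adjacent iff the (unique) path between them in `T` contains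
at least one edge labelled `1`. -/
def fitchGraph {V : Type*} (T : SimpleGraph V) (lam : Sym2 V → Bool) :
    SimpleGraph {v : V // T.IsLeaf v} where
  Adj x y := x ≠ y ∧ ∃ p : T.Walk x.1 y.1, p.IsPath ∧ ∃ e ∈ p.edges, lam e = true
  symm := ⟨by
    rintro x y ⟨hxy, p, hp, e, he, hl⟩
    exact ⟨hxy.symm, p.reverse, hp.reverse, e, by
      rw [SimpleGraph.Walk.edges_reverse]; exact List.mem_reverse.mpr he, hl⟩⟩
  loopless := ⟨by rintro x ⟨hx, -⟩; exact hx rfl⟩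

/-- A graph is an undirected Fitch graph if it is isomorphic to the Fitch graph
explained by some edge-labelled finite tree. -/
def IsFitchGraph {W : Type*} (G : SimpleGraph W) : Prop :=
  ∃ (V : Type) (T : SimpleGraph V) (lam : Sym2 V → Bool),
    Finite V ∧ T.IsTree ∧ Nonempty (G ≃g fitchGraph T lam)

private lemma aux_reach {V : Type*} {H G : SimpleGraph V} {u v : V}
    (hsub : ∀ a b, G.Adj a b → H.Adj a b ∨ s(a, b) = s(u, v)) {x y : V}
    (hr : G.Reachable x y) :
    H.Reachable x y ∨ ((H.Reachable x u ∨ H.Reachable x v) ∧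
      (H.Reachable y u ∨ H.Reachable y v)) := by
  obtain ⟨w⟩ := hr
  induction w with
  | nil => exact Or.inl (Reachable.refl _)
  | cons h p ih =>
    rename_i a b c
    rcases hsub a b h with hH | he
    · rcases ih with h1 | ⟨h2, h3⟩
      · exact Or.inl (hH.reachable.trans h1)
      · refine Or.inr ⟨?_, h3⟩
        rcases h2 with h2 | h2
        · exact Or.inl (hH.reachable.trans h2)
        · exact Or.inr (hH.reachable.trans h2)
    · rw [Sym2.eq_iff] at he
      have ha : H.Reachable a u ∨ H.Reachable a v := by
        rcases he with ⟨rfl, rfl⟩ | ⟨rfl, rfl⟩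
        · exact Or.inl (Reachable.refl _)
        · exact Or.inr (Reachable.refl _)
      have hb : H.Reachable b u ∨ H.Reachable b v := by
        rcases he with ⟨rfl, rfl⟩ | ⟨rfl, rfl⟩
        · exact Or.inr (Reachable.refl _)
        · exact Or.inl (Reachable.refl _)
      refine Or.inr ⟨ha, ?_⟩
      rcases ih with h1 | ⟨h2, h3⟩
      · rcases hb with hb | hb
        · exact Or.inl (h1.symm.trans hb)
        · exact Or.inr (h1.symm.trans hb)
      · exact h3

private lemma aux_card_add_edge {V : Type*} [Finite V] {H G : SimpleGraph V} {u v : V}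
    (hle : H ≤ G) (hsub : ∀ a b, G.Adj a b → H.Adj a b ∨ s(a, b) = s(u, v)) :
    Nat.card H.ConnectedComponent ≤ Nat.card G.ConnectedComponent + 1 := by
  classical
  have hfin : Finite G.ConnectedComponent := Quot.finite _
  let ψ : H.ConnectedComponent → G.ConnectedComponent :=
    ConnectedComponent.lift (fun x => G.connectedComponentMk x)
      (fun a b p _ => ConnectedComponent.sound (p.reachable.mono hle))
  let f : H.ConnectedComponent → Option G.ConnectedComponent :=
    fun c => if c = H.connectedComponentMk u then none else some (ψ c)
  have hinj : Function.Injective f := by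
    intro c d hcd
    by_cases hc : c = H.connectedComponentMk u <;> by_cases hd : d = H.connectedComponentMk u
    · rw [hc, hd]
    · exact absurd hcd (by simp [f, hc, hd])
    · exact absurd hcd (by simp [f, hc, hd])
    · simp only [f, if_neg hc, if_neg hd, Option.some.injEq] at hcd
      induction c using ConnectedComponent.ind with | _ x =>
      induction d using ConnectedComponent.ind with | _ y =>
      have hxy : G.Reachable x y := ConnectedComponent.exact hcd
      rcases aux_reach hsub hxy with h1 | ⟨h2, h3⟩
      · exact ConnectedComponent.sound h1
      · have hxv : H.Reachable x v := by
          rcases h2 with h2 | h2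
          · exact absurd (ConnectedComponent.sound h2) hc
          · exact h2
        have hyv : H.Reachable y v := by
          rcases h3 with h3 | h3
          · exact absurd (ConnectedComponent.sound h3) hd
          · exact h3
        exact ConnectedComponent.sound (hxv.trans hyv.symm)
  have hft : Fintype G.ConnectedComponent := Fintype.ofFinite _
  calc Nat.card H.ConnectedComponent ≤ Nat.card (Option G.ConnectedComponent) :=
        Nat.card_le_card_of_injective f hinj
    _ = Nat.card G.ConnectedComponent + 1 := by
        simp [Nat.card_eq_fintype_card]

private lemma aux_card_deleteEdges {V : Type*} [Finite V] (T : SimpleGraph V)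
    (hconn : T.Connected) (s : Finset (Sym2 V)) :
    Nat.card (T.deleteEdges ↑s).ConnectedComponent ≤ s.card + 1 := by
  classical
  induction s using Finset.induction with
  | empty =>
    simp only [Finset.coe_empty, deleteEdges_empty, Finset.card_empty, zero_add]
    have : Finite T.ConnectedComponent := Quot.finite _
    exact Finite.card_le_one_iff_subsingleton.mpr
      hconn.preconnected.subsingleton_connectedComponent
  | @insert e s hnot ih =>
    induction e using Sym2.ind with | _ u v =>
    have hle : T.deleteEdges (↑(insert s(u, v) s)) ≤ T.deleteEdges ↑s := by
      apply deleteEdges_anti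
      simp only [Finset.coe_insert]
      exact Set.subset_insert _ _
    have hsub : ∀ a b : V, (T.deleteEdges ↑s).Adj a b →
        (T.deleteEdges (↑(insert s(u, v) s))).Adj a b ∨ s(a, b) = s(u, v) := by
      intro a b hab
      rw [deleteEdges_adj] at hab
      by_cases h : s(a, b) = s(u, v)
      · exact Or.inr h
      · refine Or.inl (deleteEdges_adj.mpr ⟨hab.1, ?_⟩)
        simp only [Finset.coe_insert, Set.mem_insert_iff]
        push_neg
        exact ⟨h, hab.2⟩
    calc Nat.card (T.deleteEdges (↑(insert s(u, v) s))).ConnectedComponent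
        ≤ Nat.card (T.deleteEdges ↑s).ConnectedComponent + 1 :=
          aux_card_add_edge hle hsub
      _ ≤ s.card + 1 + 1 := by omega
      _ = (insert s(u, v) s).card + 1 := by rw [Finset.card_insert_of_notMem hnot]


/-- if `(T, lam)` is an edge-labelled tree with at least two
leaves such that the (unique) path between any two distinct leaves contains an
edge labelled `1`, then the number of `1`-labelled edges of `T` is at least
`ℓ - 1`, where `ℓ` is the number of leaves of `T`. -/
theorem one_edges_lower_bound {V : Type*} [Fintype V] (T : SimpleGraph V)
    (hT : T.IsTree) (lam : Sym2 V → Bool)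
    (hleaves : 2 ≤ {v : V | T.IsLeaf v}.ncard)
    (h1 : ∀ x y : V, T.IsLeaf x → T.IsLeaf y → x ≠ y →
      ∀ p : T.Walk x y, p.IsPath → ∃ e ∈ p.edges, lam e = true) :
    {v : V | T.IsLeaf v}.ncard - 1 ≤ {e ∈ T.edgeSet | lam e = true}.ncard := by
  classical
  set S : Set (Sym2 V) := {e ∈ T.edgeSet | lam e = true} with hS
  have hSfin : S.Finite := Set.toFinite _
  set s : Finset (Sym2 V) := hSfin.toFinset with hs
  have hscard : s.card = S.ncard := (Set.ncard_eq_toFinset_card S hSfin).symm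
  set H : SimpleGraph V := T.deleteEdges ↑s with hH
  -- leaves map injectively into components of H
  have hinj : Function.Injective
      (fun v : {v : V | T.IsLeaf v} => H.connectedComponentMk v.1) := by
    rintro ⟨x, hx⟩ ⟨y, hy⟩ hxy
    simp only at hxy
    by_contra hne
    have hne' : x ≠ y := fun h => hne (Subtype.ext h)
    have hr : H.Reachable x y := ConnectedComponent.exact hxy
    obtain ⟨w⟩ := hr
    have hp : (w.toPath : H.Walk x y).IsPath := w.toPath.2
    let p' : T.Walk x y :=
      (w.toPath : H.Walk x y).map (Hom.ofLE (deleteEdges_le _))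
    have hp' : p'.IsPath := Walk.map_isPath_of_injective (fun a b h => h) hp
    obtain ⟨e, he, hlam⟩ := h1 x y hx hy hne' p' hp'
    -- e is an edge of the walk in H, so e ∉ s; but e ∈ T.edgeSet with lam e true
    have heH : e ∈ H.edgeSet := by
      rw [Walk.edges_map] at he
      obtain ⟨e', he', rfl⟩ := List.mem_map.mp he
      have hid : Sym2.map (Hom.ofLE (deleteEdges_le (G := T) ↑s)) e' = e' := by
        induction e' using Sym2.ind with | _ a b => rfl
      rw [hid]
      exact (w.toPath : H.Walk x y).edges_subset_edgeSet he'
    rw [hH, edgeSet_deleteEdges] at heH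
    have : e ∈ S := ⟨heH.1, hlam⟩
    exact heH.2 (by rwa [hs, Set.Finite.coe_toFinset])
  have hfinH : Finite H.ConnectedComponent := Quot.finite _
  have h2 : {v : V | T.IsLeaf v}.ncard ≤ Nat.card H.ConnectedComponent := by
    rw [← Nat.card_coe_set_eq]
    exact Nat.card_le_card_of_injective _ hinj
  have h3 := aux_card_deleteEdges T hT.isConnected s
  rw [← hH] at h3
  omega
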